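/- arXiv:0808.2635 — 4 statements merged into one kernel-verified Lean document; each statement's English description precedes it below -/
import Mathlib

section
/- The linear transformation on real polynomials defined by sending x^k to x^k/k! maps every polynomial with all real roots to a polynomial with all real roots. -/
open Polynomial

/-- A real polynomial has all real roots: every complex root is real. -/
def AllRealRoots (p : ℝ[X]) : Prop :=
  ∀ z : ℂ, (p.map (algebraMap ℝ ℂ)).IsRoot z → z.im = 0

/-- The map sending x^k to x^k/k!. -/
noncomputable def Tfac (p : ℝ[X]) : ℝ[X] :=
  ∑ k ∈ Finset.range (p.natDegree + 1),
    Polynomial.C (p.coeff k / (Nat.factorial k)) * Polynomial.X ^ k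

/-- The n-th Laguerre polynomial (explicit formula). -/
noncomputable def laguerre (n : ℕ) : ℝ[X] :=
  ∑ k ∈ Finset.range (n + 1),
    Polynomial.C ((-1 : ℝ) ^ k * (n.choose k) / (Nat.factorial k)) * Polynomial.X ^ k

lemma map_ne_zero' {f : ℝ[X]} (hf : f ≠ 0) : f.map (algebraMap ℝ ℂ) ≠ 0 :=
  Polynomial.map_ne_zero hf

lemma card_roots_map (f : ℝ[X]) :
    Multiset.card (f.map (algebraMap ℝ ℂ)).roots = f.natDegree := by
  have h := splits_iff_card_roots.mp (IsAlgClosed.splits (f.map (algebraMap ℝ ℂ)))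
  rw [natDegree_map] at h
  exact h

lemma filter_real_roots (f : ℝ[X]) (hf : f ≠ 0) :
    ((f.map (algebraMap ℝ ℂ)).roots.filter (fun z => z.im = 0))
      = f.roots.map (fun x : ℝ => (x : ℂ)) := by
  have hmap := map_ne_zero' hf
  ext z
  rw [Multiset.count_filter]
  by_cases hz : z.im = 0
  · have hz' : z = ((z.re : ℝ) : ℂ) := by apply Complex.ext <;> simp [hz]
    rw [if_pos hz, hz',
      Multiset.count_map_eq_count' _ _ (fun a b h => by exact_mod_cast h),
      count_roots, count_roots]
    exact (eq_rootMultiplicity_map (f := algebraMap ℝ ℂ) (algebraMap ℝ ℂ).injective z.re).symm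
  · rw [if_neg hz]
    symm
    rw [Multiset.count_eq_zero]
    intro hmem
    obtain ⟨x, _, rfl⟩ := Multiset.mem_map.mp hmem
    exact hz (by simp)

lemma roots_conj_invariant (f : ℝ[X]) :
    (f.map (algebraMap ℝ ℂ)).roots.map (fun z => (starRingEnd ℂ) z)
      = (f.map (algebraMap ℝ ℂ)).roots := by
  have h1 : (f.map (algebraMap ℝ ℂ)).map (starRingEnd ℂ) = f.map (algebraMap ℝ ℂ) := by
    rw [Polynomial.map_map]
    congr 1
    ext x : 1
    simp
  calc (f.map (algebraMap ℝ ℂ)).roots.map (fun z => (starRingEnd ℂ) z)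
      = ((f.map (algebraMap ℝ ℂ)).map (starRingEnd ℂ)).roots :=
        ((IsAlgClosed.splits (f.map (algebraMap ℝ ℂ))).roots_map (starRingEnd ℂ)).symm
    _ = (f.map (algebraMap ℝ ℂ)).roots := by rw [h1]

lemma parity (f : ℝ[X]) (hf : f ≠ 0) :
    ∃ m : ℕ, Multiset.card f.roots + 2 * m = f.natDegree := by
  set R := (f.map (algebraMap ℝ ℂ)).roots with hR
  have hsum := Multiset.filter_add_not (fun z : ℂ => z.im = 0) R
  have h1 : Multiset.card (R.filter (fun z => z.im = 0)) = Multiset.card f.roots := by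
    rw [hR, filter_real_roots f hf, Multiset.card_map]
  have hneg : R.filter (fun z => z.im < 0)
      = (R.filter (fun z => 0 < z.im)).map (fun z => (starRingEnd ℂ) z) := by
    have hconj : R.map (fun z => (starRingEnd ℂ) z) = R := by
      rw [hR]; exact roots_conj_invariant f
    conv_lhs => rw [← hconj]
    rw [Multiset.filter_map]
    congr 1
    apply Multiset.filter_congr
    intro z _
    simp only [Function.comp_apply, Complex.conj_im]
    constructor <;> intro h <;> linarith
  have hsplit2 : Multiset.card (R.filter (fun z => ¬ z.im = 0))
      = 2 * Multiset.card (R.filter (fun z => 0 < z.im)) := by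
    have h3 := Multiset.filter_add_filter (fun z : ℂ => z.im < 0) (fun z : ℂ => 0 < z.im) R
    have h4 : R.filter (fun z => z.im < 0 ∧ 0 < z.im) = 0 := by
      rw [Multiset.filter_eq_nil]
      intro z _ hz
      linarith [hz.1, hz.2]
    have h5 : R.filter (fun z => z.im < 0 ∨ 0 < z.im) = R.filter (fun z => ¬ z.im = 0) := by
      apply Multiset.filter_congr
      intro z _
      constructor
      · intro h; cases h <;> intro h' <;> linarith
      · intro h; rcases lt_or_gt_of_ne (fun h' => h h') with h'|h'
        · exact Or.inl h'
        · exact Or.inr h'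
    rw [h4, h5, add_zero] at h3
    have := congrArg Multiset.card h3
    rw [Multiset.card_add] at this
    rw [← this, hneg, Multiset.card_map]
    ring
  refine ⟨Multiset.card (R.filter (fun z => 0 < z.im)), ?_⟩
  have := congrArg Multiset.card hsum
  rw [Multiset.card_add, h1, hsplit2] at this
  rw [this, hR, card_roots_map]

lemma allRealRoots_iff (f : ℝ[X]) (hf : f ≠ 0) :
    AllRealRoots f ↔ Multiset.card f.roots = f.natDegree := by
  have hmap := map_ne_zero' hf
  set R := (f.map (algebraMap ℝ ℂ)).roots with hR
  have h1 : Multiset.card (R.filter (fun z => z.im = 0)) = Multiset.card f.roots := by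
    rw [hR, filter_real_roots f hf, Multiset.card_map]
  have hcardR : Multiset.card R = f.natDegree := card_roots_map f
  constructor
  · intro h
    have h2 : R.filter (fun z => z.im = 0) = R := by
      rw [Multiset.filter_eq_self]
      intro z hz
      exact h z ((mem_roots hmap).mp hz)
    rw [← h1, h2, hcardR]
  · intro h z hz
    by_contra him
    have hzR : z ∈ R := (mem_roots hmap).mpr hz
    have hsum := congrArg Multiset.card (Multiset.filter_add_not (fun z : ℂ => z.im = 0) R)
    rw [Multiset.card_add, h1, h] at hsum
    have hmem : z ∈ R.filter (fun z : ℂ => ¬ z.im = 0) := Multiset.mem_filter.mpr ⟨hzR, him⟩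
    have hpos : 0 < Multiset.card (R.filter (fun z : ℂ => ¬ z.im = 0)) :=
      Multiset.card_pos_iff_exists_mem.mpr ⟨z, hmem⟩
    omega

lemma mult_le (g : ℝ[X]) (r : ℝ) (x : ℝ) (hq : g - C r * derivative g ≠ 0) :
    g.rootMultiplicity x - 1 ≤ (g - C r * derivative g).rootMultiplicity x := by
  rcases eq_or_ne g 0 with rfl|hg
  · simp
  rw [le_rootMultiplicity_iff hq]
  have h1 : (X - C x) ^ (g.rootMultiplicity x - 1) ∣ g :=
    dvd_trans (pow_dvd_pow _ (Nat.sub_le _ _)) (pow_rootMultiplicity_dvd g x)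
  have h2 : (X - C x) ^ (g.rootMultiplicity x - 1) ∣ derivative g := by
    rcases eq_or_ne (derivative g) 0 with h|h
    · simp [h]
    · exact dvd_trans
        (pow_dvd_pow _ (rootMultiplicity_sub_one_le_derivative_rootMultiplicity g x))
        (pow_rootMultiplicity_dvd _ x)
  exact dvd_sub h1 (h2.mul_left _)

lemma interleave (g : ℝ[X]) (r : ℝ) (hr : r ≠ 0) (hg : g ≠ 0)
    (hq : g - C r * derivative g ≠ 0) :
    g.roots.toFinset.card ≤
      ((g - C r * derivative g).roots.toFinset \ g.roots.toFinset).card + 1 := by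
  refine Finset.card_le_diff_of_interleaved fun x hx y hy hxy hxy' => ?_
  rw [Multiset.mem_toFinset, mem_roots hg] at hx hy
  set f : ℝ → ℝ := fun t => Real.exp (-(t / r)) * g.eval t with hfdef
  have hd : ∀ t : ℝ, HasDerivAt f
      (Real.exp (-(t/r)) * (-(1/r)) * g.eval t
        + Real.exp (-(t/r)) * (derivative g).eval t) t := by
    intro t
    have h1 : HasDerivAt (fun s : ℝ => Real.exp (-(s/r))) (Real.exp (-(t/r)) * (-(1/r))) t := by
      have h0 : HasDerivAt (fun s : ℝ => -(s/r)) (-(1/r)) t := by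
        simpa using ((hasDerivAt_id t).div_const r).fun_neg
      simpa [mul_comm] using h0.exp
    exact h1.mul (g.hasDerivAt t)
  have hfc : ContinuousOn f (Set.Icc x y) :=
    (Continuous.mul (by fun_prop) g.continuous).continuousOn
  have hfI : f x = f y := by simp [hfdef, hx.eq_zero, hy.eq_zero]
  obtain ⟨z, hz1, hz2⟩ := exists_deriv_eq_zero hxy hfc hfI
  refine ⟨z, ?_, hz1.1, hz1.2⟩
  rw [Multiset.mem_toFinset, mem_roots hq]
  rw [(hd z).deriv] at hz2
  have hexp : Real.exp (-(z/r)) ≠ 0 := Real.exp_ne_zero _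
  show IsRoot _ z
  have h3 : -(1/r) * g.eval z + (derivative g).eval z = 0 := by
    have h4 : Real.exp (-(z/r)) * (-(1/r) * g.eval z + (derivative g).eval z) = 0 := by
      rw [← hz2]; ring
    rcases mul_eq_zero.mp h4 with h|h
    · exact absurd h hexp
    · exact h
  have h5 : -g.eval z + r * (derivative g).eval z = 0 := by
    have hcalc : r * (-(1/r) * g.eval z + (derivative g).eval z)
        = -g.eval z + r * (derivative g).eval z := by
      field_simp <;> ring
    rw [← hcalc, h3, mul_zero]
  simp only [IsRoot, eval_sub, eval_mul, eval_C]
  linarith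

lemma card_roots_le_q (g : ℝ[X]) (r : ℝ) (hr : r ≠ 0) (hg : g ≠ 0)
    (hq : g - C r * derivative g ≠ 0) :
    Multiset.card g.roots ≤ Multiset.card (g - C r * derivative g).roots + 1 := by
  set q : ℝ[X] := g - C r * derivative g with hqdef
  calc
    Multiset.card g.roots = ∑ x ∈ g.roots.toFinset, g.roots.count x :=
      (Multiset.toFinset_sum_count_eq _).symm
    _ = ∑ x ∈ g.roots.toFinset, (g.roots.count x - 1 + 1) :=
      (Eq.symm <| Finset.sum_congr rfl fun _ hx => tsub_add_cancel_of_le <|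
        Nat.succ_le_iff.2 <| Multiset.count_pos.2 <| Multiset.mem_toFinset.1 hx)
    _ = (∑ x ∈ g.roots.toFinset, (g.rootMultiplicity x - 1)) + g.roots.toFinset.card := by
      simp only [Finset.sum_add_distrib, Finset.card_eq_sum_ones, count_roots]
    _ ≤ (∑ x ∈ g.roots.toFinset, q.rootMultiplicity x) +
          ((q.roots.toFinset \ g.roots.toFinset).card + 1) :=
      (add_le_add
        (Finset.sum_le_sum fun x _ => mult_le g r x hq)
        (interleave g r hr hg hq))
    _ ≤ (∑ x ∈ g.roots.toFinset, q.roots.count x) +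
          ((∑ x ∈ q.roots.toFinset \ g.roots.toFinset, q.roots.count x) + 1) := by
      simp only [← count_roots]
      refine add_le_add_right (add_le_add_left ((Finset.card_eq_sum_ones _).trans_le ?_) _) _
      refine Finset.sum_le_sum fun x hx => Nat.succ_le_iff.2 <| ?_
      rw [Multiset.count_pos, ← Multiset.mem_toFinset]
      exact (Finset.mem_sdiff.1 hx).1
    _ = Multiset.card q.roots + 1 := by
      rw [← add_assoc, ← Finset.sum_union Finset.disjoint_sdiff, Finset.union_sdiff_self_eq_union,
        ← Multiset.toFinset_sum_count_eq, ← Finset.sum_subset Finset.subset_union_right]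
      intro x _ hx₂
      simpa only [Multiset.mem_toFinset, Multiset.count_eq_zero] using hx₂

lemma good_step (g : ℝ[X]) (r : ℝ) (hg : g ≠ 0)
    (hcard : Multiset.card g.roots = g.natDegree) :
    (g - C r * derivative g) ≠ 0 ∧
      Multiset.card (g - C r * derivative g).roots = (g - C r * derivative g).natDegree ∧
      (g - C r * derivative g).natDegree = g.natDegree := by
  rcases eq_or_ne r 0 with rfl|hr
  · simp only [map_zero, zero_mul, sub_zero]
    exact ⟨hg, hcard, trivial⟩
  rcases eq_or_ne g.natDegree 0 with h0|h0
  · have hd0 : derivative g = 0 := by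
      have hc := eq_C_of_natDegree_eq_zero h0
      rw [hc]; simp
    rw [hd0]
    simp only [mul_zero, sub_zero]
    exact ⟨hg, hcard, trivial⟩
  · have hdeg : (C r * derivative g).natDegree < g.natDegree :=
      lt_of_le_of_lt (natDegree_C_mul_le r (derivative g)) (natDegree_derivative_lt h0)
    have hdq : (g - C r * derivative g).natDegree = g.natDegree :=
      natDegree_sub_eq_left_of_natDegree_lt hdeg
    have hq : g - C r * derivative g ≠ 0 := by
      intro h
      rw [h] at hdq
      simp at hdq
      exact h0 hdq.symm
    refine ⟨hq, ?_, hdq⟩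
    have h1 := card_roots_le_q g r hr hg hq
    have h2 : Multiset.card (g - C r * derivative g).roots ≤ g.natDegree := by
      rw [← hdq]; exact card_roots' _
    obtain ⟨m, hm⟩ := parity (g - C r * derivative g) hq
    rw [hdq] at hm
    rw [hdq]
    omega

noncomputable def DOp : Module.End ℝ ℝ[X] := Polynomial.derivative

lemma aeval_lin (r : ℝ) (f : ℝ[X]) :
    (aeval DOp (1 - C r * X) : Module.End ℝ ℝ[X]) f = f - C r * derivative f := by
  rw [map_sub, map_one, map_mul, aeval_C, aeval_X, LinearMap.sub_apply, Module.End.one_apply,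
    Module.End.mul_apply, Module.algebraMap_end_apply, smul_eq_C_mul]
  rfl

lemma list_prod_apply (l : List ℝ) (v : ℝ[X]) :
    ((l.map fun r => (aeval DOp (1 - C r * X) : Module.End ℝ ℝ[X]))).prod v
      = l.foldr (fun r w => w - C r * derivative w) v := by
  induction l with
  | nil => simp
  | cons r t ih =>
    rw [List.map_cons, List.prod_cons, List.foldr_cons, Module.End.mul_apply, ih, aeval_lin]

lemma aeval_reflect_X_pow (p : ℝ[X]) (n : ℕ) (hn : p.natDegree ≤ n) :
    (aeval DOp (reflect n p) : Module.End ℝ ℝ[X]) (X ^ n)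
      = ∑ k ∈ Finset.range (n + 1),
          (Nat.descFactorial n (n - k) : ℝ) • (C (p.coeff k) * X ^ k) := by
  rw [aeval_endomorphism]
  have hdeg : (reflect n p).natDegree < n + 1 := by
    rw [Nat.lt_succ_iff, natDegree_le_iff_coeff_eq_zero]
    intro m hm
    rw [coeff_reflect]
    have hrev : (revAt n) m = m := revAt_eq_self_of_lt hm
    rw [hrev]
    exact coeff_eq_zero_of_natDegree_lt (lt_of_le_of_lt hn hm)
  have hsum := Polynomial.sum_over_range' (reflect n p)
      (f := fun j (b : ℝ) => b • ((DOp ^ j) (X ^ n)))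
      (fun j => zero_smul ℝ _) (n + 1) hdeg
  rw [hsum, ← Finset.sum_range_reflect]
  refine Finset.sum_congr rfl fun k hk => ?_
  rw [Finset.mem_range, Nat.lt_succ_iff] at hk
  have h1 : n + 1 - 1 - k = n - k := by omega
  simp only [h1, coeff_reflect, revAt_le (Nat.sub_le n k), Nat.sub_sub_self hk,
    Module.End.pow_apply]
  show p.coeff k • derivative^[n - k] (X ^ n) = _
  rw [iterate_derivative_X_pow_eq_smul, Nat.sub_sub_self hk, smul_eq_C_mul, smul_eq_C_mul,
    smul_eq_C_mul]
  ring

lemma key_identity (p : ℝ[X]) :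
    (aeval DOp (reflect p.natDegree p) : Module.End ℝ ℝ[X]) (X ^ p.natDegree)
      = (p.natDegree.factorial : ℝ) • Tfac p := by
  rw [aeval_reflect_X_pow p p.natDegree le_rfl, Tfac, Finset.smul_sum]
  refine Finset.sum_congr rfl fun k hk => ?_
  rw [Finset.mem_range, Nat.lt_succ_iff] at hk
  have h : (Nat.descFactorial p.natDegree (p.natDegree - k) : ℝ) * (k.factorial : ℝ)
      = (p.natDegree.factorial : ℝ) := by
    rw [← Nat.cast_mul]
    norm_cast
    rw [mul_comm]
    have h2 := Nat.factorial_mul_descFactorial (Nat.sub_le p.natDegree k)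
    rwa [Nat.sub_sub_self hk] at h2
  have hk0 : (k.factorial : ℝ) ≠ 0 := Nat.cast_ne_zero.mpr (Nat.factorial_ne_zero k)
  rw [smul_eq_C_mul, smul_eq_C_mul, ← mul_assoc, ← mul_assoc, ← map_mul, ← map_mul]
  congr 2
  field_simp
  linear_combination p.coeff k * h

lemma natDegree_linprod_le (l : List ℝ) :
    ((l.map fun a => (X : ℝ[X]) - C a).prod).natDegree ≤ l.length := by
  induction l with
  | nil => simp
  | cons r t ih =>
    rw [List.map_cons, List.prod_cons, List.length_cons]
    refine le_trans natDegree_mul_le ?_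
    rw [natDegree_X_sub_C]
    omega

lemma reflect_one_X_sub_C (r : ℝ) : reflect 1 ((X : ℝ[X]) - C r) = 1 - C r * X := by
  have h : (X : ℝ[X]) - C r = X ^ 1 + C (-r) * X ^ 0 := by
    simp [sub_eq_add_neg]
  rw [h, reflect_add, reflect_C_mul, reflect_monomial, reflect_monomial]
  have h1 : (revAt 1) 1 = 0 := revAt_le (le_refl 1)
  have h0 : (revAt 1) 0 = 1 := revAt_le (Nat.zero_le 1)
  rw [h1, h0, pow_zero, pow_one, map_neg]
  ring

lemma reflect_linprod (c : ℝ) (l : List ℝ) :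
    reflect l.length (C c * (l.map fun a => (X : ℝ[X]) - C a).prod)
      = C c * (l.map fun a => (1 : ℝ[X]) - C a * X).prod := by
  induction l with
  | nil => simp [reflect_C]
  | cons r t ih =>
    rw [List.map_cons, List.prod_cons, List.map_cons, List.prod_cons, List.length_cons]
    have hmul : C c * ((X - C r) * (t.map fun a => (X : ℝ[X]) - C a).prod)
        = (X - C r) * (C c * (t.map fun a => (X : ℝ[X]) - C a).prod) := by ring
    have hlen : t.length + 1 = 1 + t.length := by omega
    rw [hmul, hlen,
      reflect_mul _ _ (le_of_eq (natDegree_X_sub_C r))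
        (le_trans (natDegree_C_mul_le c _) (natDegree_linprod_le t)),
      ih, reflect_one_X_sub_C]
    ring

lemma good_fold (l : List ℝ) (v : ℝ[X]) (hv : v ≠ 0)
    (hcv : Multiset.card v.roots = v.natDegree) :
    (l.foldr (fun r w => w - C r * derivative w) v) ≠ 0 ∧
      Multiset.card (l.foldr (fun r w => w - C r * derivative w) v).roots
        = (l.foldr (fun r w => w - C r * derivative w) v).natDegree ∧
      (l.foldr (fun r w => w - C r * derivative w) v).natDegree = v.natDegree := by
  induction l with
  | nil => exact ⟨hv, hcv, rfl⟩
  | cons r t ih =>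
    obtain ⟨h1, h2, h3⟩ := ih
    obtain ⟨g1, g2, g3⟩ := good_step _ r h1 h2
    exact ⟨g1, g2, g3.trans h3⟩

theorem stmt_0 (p : ℝ[X]) (hp : AllRealRoots p) : AllRealRoots (Tfac p) := by
  have hp0 : p ≠ 0 := by
    intro h
    have h2 := hp Complex.I (by rw [h]; simp [IsRoot])
    simpa using h2
  have hcard : Multiset.card p.roots = p.natDegree := (allRealRoots_iff p hp0).mp hp
  have hc0 : p.leadingCoeff ≠ 0 := leadingCoeff_ne_zero.mpr hp0
  have hsplits : Splits p := splits_iff_card_roots.mpr hcard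
  have hfact := hsplits.eq_prod_roots
  set l := p.roots.toList with hl
  have hlist : (p.roots.map fun a => (X : ℝ[X]) - C a).prod
      = (l.map fun a => (X : ℝ[X]) - C a).prod := by
    conv_lhs => rw [← Multiset.coe_toList p.roots]
    rw [Multiset.map_coe, Multiset.prod_coe]
  have hlen : l.length = p.natDegree := by rw [hl, Multiset.length_toList, hcard]
  have hfact' : p = C p.leadingCoeff * (l.map fun a => (X : ℝ[X]) - C a).prod := by
    conv_lhs => rw [hfact]
    rw [hlist]
  have hrefl : reflect p.natDegree p
      = C p.leadingCoeff * (l.map fun a => (1 : ℝ[X]) - C a * X).prod := by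
    conv_lhs => rw [← hlen, hfact']
    exact reflect_linprod p.leadingCoeff l
  have hkey := key_identity p
  rw [hrefl, map_mul, aeval_C] at hkey
  rw [Module.End.mul_apply, Module.algebraMap_end_apply, map_list_prod, List.map_map] at hkey
  simp only [Function.comp_def] at hkey
  rw [list_prod_apply l (X ^ p.natDegree)] at hkey
  set h := l.foldr (fun r w => w - C r * derivative w) (X ^ p.natDegree) with hh
  have hXn : (X : ℝ[X]) ^ p.natDegree ≠ 0 := pow_ne_zero _ X_ne_zero
  have hXc : Multiset.card ((X : ℝ[X]) ^ p.natDegree).roots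
      = ((X : ℝ[X]) ^ p.natDegree).natDegree := by
    rw [roots_pow, roots_X, natDegree_pow, natDegree_X]
    simp
  obtain ⟨hg1, hg2, hg3⟩ := good_fold l (X ^ p.natDegree) hXn hXc
  rw [natDegree_pow, natDegree_X, mul_one] at hg3
  -- hkey : p.leadingCoeff • h = (n! : ℝ) • Tfac p
  have hfac0 : (p.natDegree.factorial : ℝ) ≠ 0 :=
    Nat.cast_ne_zero.mpr (Nat.factorial_ne_zero _)
  have hTfac : Tfac p = C ((p.natDegree.factorial : ℝ)⁻¹ * p.leadingCoeff) * h := by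
    have h4 : C (p.natDegree.factorial : ℝ) * Tfac p = C p.leadingCoeff * h := by
      rw [← smul_eq_C_mul, ← smul_eq_C_mul, ← hkey]
    have h5 := congrArg (fun q => C (p.natDegree.factorial : ℝ)⁻¹ * q) h4
    simp only [← mul_assoc, ← map_mul, inv_mul_cancel₀ hfac0, map_one, one_mul] at h5
    exact h5
  have ha0 : (p.natDegree.factorial : ℝ)⁻¹ * p.leadingCoeff ≠ 0 :=
    mul_ne_zero (inv_ne_zero hfac0) hc0
  have hT0 : Tfac p ≠ 0 := by
    rw [hTfac]
    exact mul_ne_zero (fun hC => ha0 (by simpa using hC)) hg1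
  rw [allRealRoots_iff _ hT0, hTfac, natDegree_C_mul ha0, ← smul_eq_C_mul,
    roots_smul_nonzero _ ha0, hg2]
end

section
/- The linear transformation on real polynomials defined by sending x^n to the n-th Laguerre polynomial L_n(x) preserves real-rootedness: if p has all real roots, then its image has all real roots. -/
open Polynomial

/-- The linear transformation sending x^n to the n-th Laguerre polynomial. -/
noncomputable def Phi (p : ℝ[X]) : ℝ[X] :=
  ∑ n ∈ Finset.range (p.natDegree + 1), Polynomial.C (p.coeff n) * laguerre n

namespace LagAux

open Complex

/-- All roots of a complex polynomial are real. -/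
def RR (g : ℂ[X]) : Prop := ∀ z : ℂ, g.IsRoot z → z.im = 0

lemma eval_prod_ne_zero (s : Multiset ℂ) (hs : ∀ r ∈ s, r.im = 0) (z : ℂ) (hz : z.im ≠ 0) :
    ((s.map fun r => X - C r).prod).eval z ≠ 0 := by
  rw [eval_multiset_prod]
  apply Multiset.prod_ne_zero
  intro h0
  simp only [Multiset.mem_map] at h0
  obtain ⟨q, ⟨r, hr, rfl⟩, h0⟩ := h0
  simp only [eval_sub, eval_X, eval_C] at h0
  apply hz
  have : (z - r).im = 0 := by rw [h0]; simp
  simpa [hs r hr] using this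

lemma im_sign (s : Multiset ℂ) (hne : s ≠ 0) (hs : ∀ r ∈ s, r.im = 0) (z : ℂ) (hz : z.im ≠ 0) :
    z.im * (((s.map fun r => X - C r).prod.derivative.eval z) *
      (starRingEnd ℂ) ((s.map fun r => X - C r).prod.eval z)).im < 0 := by
  induction s using Multiset.induction_on with
  | empty => exact absurd rfl hne
  | cons a s ih =>
    have ha : a.im = 0 := hs a (Multiset.mem_cons_self a s)
    have hs' : ∀ r ∈ s, r.im = 0 := fun r hr => hs r (Multiset.mem_cons_of_mem hr)
    rw [Multiset.map_cons, Multiset.prod_cons]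
    set M := (s.map fun r => X - C r).prod with hM
    have hd : derivative ((X - C a) * M) = M + (X - C a) * derivative M := by
      rw [derivative_mul, derivative_sub, derivative_X, derivative_C, sub_zero, one_mul]
    rw [hd]
    set A := M.eval z with hA'
    set A' := (derivative M).eval z
    have hA : A ≠ 0 := eval_prod_ne_zero s hs' z hz
    have hev : eval z (M + (X - C a) * derivative M) = A + (z - a) * A' := by
      simp [hA', A']
    have hev2 : eval z ((X - C a) * M) = (z - a) * A := by simp [hA']
    rw [hev, hev2]
    set t := z - a with ht
    have hE : (A + t * A') * (starRingEnd ℂ) (t * A)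
        = (starRingEnd ℂ) t * (A * (starRingEnd ℂ) A)
          + (t * (starRingEnd ℂ) t) * (A' * (starRingEnd ℂ) A) := by
      rw [map_mul]; ring
    rw [hE, Complex.mul_conj, Complex.mul_conj]
    have htim : t.im = z.im := by simp [ht, ha]
    have him : ((starRingEnd ℂ) t * ((normSq A : ℝ) : ℂ)
          + ((normSq t : ℝ) : ℂ) * (A' * (starRingEnd ℂ) A)).im
        = -z.im * normSq A + normSq t * (A' * (starRingEnd ℂ) A).im := by
      simp [Complex.add_im, Complex.mul_im, htim]
    rw [him]
    have hnA : 0 < normSq A := normSq_pos.mpr hA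
    have h1 : 0 < z.im * z.im * normSq A := mul_pos (mul_self_pos.mpr hz) hnA
    rcases eq_or_ne s 0 with rfl | hsne
    · have hA0 : A' = 0 := by simp [A', hM]
      rw [hA0]
      simp only [zero_mul, mul_zero, Complex.zero_im, add_zero]
      nlinarith
    · have hIH := ih hsne hs'
      have h2 : normSq t * (z.im * (A' * (starRingEnd ℂ) A).im) ≤ 0 :=
        mul_nonpos_of_nonneg_of_nonpos (normSq_nonneg t) hIH.le
      nlinarith

lemma roots_real {g : ℂ[X]} (hg : RR g) : ∀ r ∈ g.roots, r.im = 0 := by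
  intro r hr
  exact hg r (isRoot_of_mem_roots hr)

lemma step_ne_zero {g : ℂ[X]} (hg : g ≠ 0) (c : ℂ) : g - C c * derivative g ≠ 0 := by
  rcases eq_or_ne g.natDegree 0 with h0 | h0
  · have hd0 : derivative g = 0 := by
      rw [Polynomial.eq_C_of_natDegree_eq_zero h0, derivative_C]
    rw [hd0, mul_zero, sub_zero]; exact hg
  · intro h
    have hcoeff : (g - C c * derivative g).coeff g.natDegree = g.leadingCoeff := by
      rw [coeff_sub, coeff_C_mul,
        coeff_eq_zero_of_natDegree_lt (natDegree_derivative_lt h0)]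
      rw [mul_zero, sub_zero, leadingCoeff]
    rw [h, coeff_zero] at hcoeff
    exact leadingCoeff_ne_zero.mpr hg hcoeff.symm

lemma step_RR {g : ℂ[X]} (hg : g ≠ 0) (hr : RR g) {c : ℂ} (hc : c.im = 0) :
    RR (g - C c * derivative g) := by
  intro z hz
  by_contra hzim
  set a := g.leadingCoeff with ha
  have hane : a ≠ 0 := leadingCoeff_ne_zero.mpr hg
  have hsplit : g = C a * (g.roots.map fun r => X - C r).prod :=
    (IsAlgClosed.splits g).eq_prod_roots
  set M := (g.roots.map fun r => X - C r).prod with hMdef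
  have hroots := roots_real hr
  have hgz : g.eval z ≠ 0 := by
    rw [hsplit]
    simp only [eval_mul, eval_C]
    exact mul_ne_zero hane (eval_prod_ne_zero _ hroots z hzim)
  simp only [IsRoot, eval_sub, eval_mul, eval_C, sub_eq_zero] at hz
  have hgd : (derivative g).eval z ≠ 0 := by
    intro h
    rw [h, mul_zero] at hz
    exact hgz hz
  rcases eq_or_ne g.roots 0 with h0 | h0
  · have hM1 : M = 1 := by rw [hMdef, h0]; simp
    have hdz : derivative g = 0 := by rw [hsplit, hM1, mul_one, derivative_C]
    rw [hdz] at hgd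
    simp at hgd
  · have hkey := im_sign g.roots h0 hroots z hzim
    rw [← hMdef] at hkey
    have hdg : derivative g = C a * derivative M := by
      conv_lhs => rw [hsplit]
      rw [derivative_C_mul]
    have hprod : (derivative g).eval z * (starRingEnd ℂ) (g.eval z)
        = ((normSq a : ℝ) : ℂ) * (M.derivative.eval z * (starRingEnd ℂ) (M.eval z)) := by
      conv_lhs => rw [hdg, hsplit]
      simp only [eval_mul, eval_C, map_mul]
      rw [← Complex.mul_conj]
      ring
    have hreal : ((derivative g).eval z * (starRingEnd ℂ) (g.eval z)).im = 0 := by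
      have hcc : (starRingEnd ℂ) c = c := Complex.conj_eq_iff_im.mpr hc
      rw [hz, map_mul, hcc]
      have : (derivative g).eval z * (c * (starRingEnd ℂ) ((derivative g).eval z))
          = c * ((normSq ((derivative g).eval z) : ℝ) : ℂ) := by
        rw [← Complex.mul_conj]; ring
      rw [this]
      simp [Complex.mul_im, hc]
    rw [hprod] at hreal
    have hnsq : (0:ℝ) < normSq a := normSq_pos.mpr hane
    have him0 : (M.derivative.eval z * (starRingEnd ℂ) (M.eval z)).im = 0 := by
      rw [Complex.mul_im] at hreal
      simp only [Complex.ofReal_re, Complex.ofReal_im, zero_mul, add_zero] at hreal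
      exact (mul_eq_zero.mp hreal).resolve_left hnsq.ne'
    rw [him0, mul_zero] at hkey
    exact lt_irrefl 0 hkey

/-- The derivative as a module endomorphism of `ℂ[X]`. -/
noncomputable def Dop : Module.End ℂ ℂ[X] := Polynomial.derivative

lemma Dop_pow_apply (i : ℕ) (f : ℂ[X]) : (Dop ^ i) f = derivative^[i] f := by
  rw [Module.End.pow_apply]; rfl

lemma aeval_one_sub_CX (r : ℂ) (g : ℂ[X]) :
    (Polynomial.aeval Dop (1 - C r * X)) g = g - C r * derivative g := by
  simp only [map_sub, map_one, map_mul, aeval_X, aeval_C]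
  have : ((1 : Module.End ℂ ℂ[X]) - algebraMap ℂ (Module.End ℂ ℂ[X]) r * Dop) g
      = g - r • (Dop g) := by
    simp [LinearMap.sub_apply, Module.End.mul_apply, Module.algebraMap_end_apply]
  rw [this, smul_eq_C_mul]
  rfl

lemma fold_RR (s : Multiset ℂ) (hs : ∀ r ∈ s, r.im = 0) (f : ℂ[X]) (hf : f ≠ 0) (hrr : RR f) :
    (Polynomial.aeval Dop ((s.map fun r => 1 - C r * X).prod)) f ≠ 0 ∧
    RR ((Polynomial.aeval Dop ((s.map fun r => 1 - C r * X).prod)) f) := by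
  induction s using Multiset.induction_on with
  | empty => simpa using ⟨hf, hrr⟩
  | cons r s ih =>
    have hr : r.im = 0 := hs r (Multiset.mem_cons_self r s)
    have hs' : ∀ x ∈ s, x.im = 0 := fun x hx => hs x (Multiset.mem_cons_of_mem hx)
    obtain ⟨h1, h2⟩ := ih hs'
    rw [Multiset.map_cons, Multiset.prod_cons, map_mul, Module.End.mul_apply, aeval_one_sub_CX]
    exact ⟨step_ne_zero h1 r, step_RR h1 h2 hr⟩

lemma laguerre_coeff (m j : ℕ) :
    (laguerre m).coeff j = (-1 : ℝ) ^ j * (m.choose j) / (Nat.factorial j) := by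
  rw [laguerre, finset_sum_coeff]
  simp only [coeff_C_mul, coeff_X_pow]
  rcases lt_or_ge j (m + 1) with h | h
  · rw [Finset.sum_eq_single j]
    · simp
    · intro b _ hb; simp [Ne.symm hb]
    · intro hj; exact absurd (Finset.mem_range.mpr h) hj
  · have hz : m.choose j = 0 := Nat.choose_eq_zero_of_lt (by omega)
    rw [hz]
    simp only [Nat.cast_zero, mul_zero, zero_div]
    apply Finset.sum_eq_zero
    intro b hb
    have : j ≠ b := by rw [Finset.mem_range] at hb; omega
    simp [this]

lemma coeff_Phi (p : ℝ[X]) (j : ℕ) :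
    (Phi p).coeff j = ∑ m ∈ Finset.range (p.natDegree + 1),
      p.coeff m * ((-1 : ℝ) ^ j * (m.choose j) / (Nat.factorial j)) := by
  rw [Phi, finset_sum_coeff]
  apply Finset.sum_congr rfl
  intro m _
  rw [coeff_C_mul, laguerre_coeff]

lemma one_sub_X_pow_coeff (m j : ℕ) :
    (((1 : ℂ[X]) - X) ^ m).coeff j = (-1 : ℂ) ^ j * (m.choose j) := by
  have h : ((1 : ℂ[X]) - X) ^ m = ∑ k ∈ Finset.range (m + 1),
      C ((-1 : ℂ) ^ k * (m.choose k)) * X ^ k := by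
    rw [sub_eq_add_neg, add_comm, add_pow]
    apply Finset.sum_congr rfl
    intro k _
    rw [neg_pow]
    simp only [map_mul, map_pow, map_neg, map_one, map_natCast]
    ring
  rw [h, finset_sum_coeff]
  simp only [coeff_C_mul, coeff_X_pow]
  rcases lt_or_ge j (m + 1) with hlt | hle
  · rw [Finset.sum_eq_single j]
    · simp
    · intro b _ hb; simp [Ne.symm hb]
    · intro hj; exact absurd (Finset.mem_range.mpr hlt) hj
  · have hz : m.choose j = 0 := Nat.choose_eq_zero_of_lt (by omega)
    rw [hz]
    simp only [Nat.cast_zero, mul_zero]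
    apply Finset.sum_eq_zero
    intro b hb
    have : j ≠ b := by rw [Finset.mem_range] at hb; omega
    simp [this]

lemma coeff_Q (p : ℝ[X]) (j : ℕ) :
    ((p.map (algebraMap ℝ ℂ)).comp (1 - X)).coeff j
      = ∑ m ∈ Finset.range (p.natDegree + 1),
          (p.coeff m : ℂ) * ((-1 : ℂ) ^ j * (m.choose j)) := by
  set P := p.map (algebraMap ℝ ℂ) with hP
  have hdeg : P.natDegree < p.natDegree + 1 :=
    Nat.lt_succ_of_le natDegree_map_le
  have hcomp : P.comp (1 - X) = ∑ m ∈ Finset.range (p.natDegree + 1),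
      C (P.coeff m) * (1 - X) ^ m := by
    rw [comp_eq_sum_left, Polynomial.sum_over_range' P (by simp) _ hdeg]
  rw [hcomp, finset_sum_coeff]
  apply Finset.sum_congr rfl
  intro m _
  rw [coeff_C_mul, one_sub_X_pow_coeff, hP, coeff_map]
  rfl

lemma aeval_D_apply (g f : ℂ[X]) {N : ℕ} (hN : g.natDegree < N) :
    (Polynomial.aeval Dop g) f = ∑ i ∈ Finset.range N, g.coeff i • derivative^[i] f := by
  rw [Polynomial.aeval_eq_sum_range' hN]
  rw [LinearMap.sum_apply]
  apply Finset.sum_congr rfl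
  intro i _
  rw [LinearMap.smul_apply, Dop_pow_apply]

lemma natDegree_reflect_le (g : ℂ[X]) (n : ℕ) (hg : g.natDegree ≤ n) :
    (reflect n g).natDegree ≤ n := by
  apply Polynomial.natDegree_le_iff_coeff_eq_zero.mpr
  intro i hi
  rw [coeff_reflect, revAt_eq_self_of_lt hi]
  exact coeff_eq_zero_of_natDegree_lt (lt_of_le_of_lt hg hi)

lemma W_coeff (g : ℂ[X]) (n : ℕ) (hg : g.natDegree ≤ n) (j : ℕ) :
    ((Polynomial.aeval Dop (reflect n g)) (X ^ n : ℂ[X])).coeff j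
      = if j ≤ n then g.coeff j * (n.descFactorial (n - j) : ℂ) else 0 := by
  rw [aeval_D_apply _ _ (Nat.lt_succ_of_le (natDegree_reflect_le g n hg)), finset_sum_coeff]
  have hterm : ∀ i ∈ Finset.range (n + 1),
      ((reflect n g).coeff i • derivative^[i] (X ^ n : ℂ[X])).coeff j
        = g.coeff (n - i) * ((n.descFactorial i : ℂ) * (X ^ (n - i) : ℂ[X]).coeff j) := by
    intro i hi
    rw [Polynomial.iterate_derivative_X_pow_eq_C_mul, coeff_smul, coeff_C_mul,
      coeff_reflect, revAt_le (Nat.lt_succ_iff.mp (Finset.mem_range.mp hi))]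
    simp [smul_eq_mul]
  rw [Finset.sum_congr rfl hterm]
  simp only [coeff_X_pow]
  rcases le_or_gt j n with hj | hj
  · rw [Finset.sum_eq_single (n - j)]
    · have h1 : n - (n - j) = j := by omega
      rw [h1, if_pos rfl, if_pos hj, mul_one]
    · intro b hb hbne
      have h2 : j ≠ n - b := by
        rw [Finset.mem_range] at hb; omega
      simp [h2]
    · intro hmem
      exact absurd (Finset.mem_range.mpr (by omega)) hmem
  · rw [if_neg (not_le.mpr hj)]
    apply Finset.sum_eq_zero
    intro b hb
    have h2 : j ≠ n - b := by rw [Finset.mem_range] at hb; omega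
    simp [h2]

lemma reflect_one_X_sub_C (a : ℂ) : reflect 1 (X - C a) = 1 - C a * X := by
  have h1 : (X : ℂ[X]) = X ^ 1 := (pow_one X).symm
  rw [reflect_sub, reflect_C, h1, reflect_monomial]
  norm_num [revAt_le]

lemma reflect_prod (s : Multiset ℂ) :
    reflect (Multiset.card s) ((s.map fun r => X - C r).prod)
      = (s.map fun r => (1 : ℂ[X]) - C r * X).prod := by
  induction s using Multiset.induction_on with
  | empty => simp
  | cons a s ih =>
    rw [Multiset.map_cons, Multiset.prod_cons, Multiset.card_cons,
      Multiset.map_cons, Multiset.prod_cons]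
    have hfd : (X - C a : ℂ[X]).natDegree ≤ 1 := (natDegree_X_sub_C a).le
    have hgd : ((s.map fun r => X - C r).prod).natDegree ≤ Multiset.card s := by
      rw [natDegree_multiset_prod_X_sub_C_eq_card]
    have := reflect_mul (X - C a) ((s.map fun r => X - C r).prod) hfd hgd
    rw [show Multiset.card s + 1 = 1 + Multiset.card s by omega, this,
      reflect_one_X_sub_C, ih]

end LagAux

theorem stmt_4 (p : ℝ[X]) (hp : AllRealRoots p) : AllRealRoots (Phi p) := by
  classical
  open LagAux in
  -- p is nonzero
  have hp0 : p ≠ 0 := by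
    intro h
    have := hp Complex.I (by simp [h, Polynomial.IsRoot])
    simp at this
  set n := p.natDegree with hn
  set P := p.map (algebraMap ℝ ℂ) with hPdef
  have hP0 : P ≠ 0 := by
    rw [hPdef]
    exact (Polynomial.map_ne_zero_iff (algebraMap ℝ ℂ).injective).mpr hp0
  set Q := P.comp (1 - X) with hQdef
  have h1X : ((1 : ℂ[X]) - X).natDegree = 1 := by
    have : ((1 : ℂ[X]) - X) = -(X - Polynomial.C 1) := by
      rw [neg_sub, map_one]
    rw [this, natDegree_neg, natDegree_X_sub_C]
  have hQdeg : Q.natDegree = n := by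
    rw [hQdef, natDegree_comp, h1X, mul_one, hPdef,
      Polynomial.natDegree_map_eq_of_injective (algebraMap ℝ ℂ).injective]
  have hQ0 : Q ≠ 0 := by
    intro h
    rcases (Polynomial.comp_eq_zero_iff).mp h with h' | ⟨_, h2⟩
    · exact hP0 h'
    · have := congrArg Polynomial.natDegree h2
      rw [h1X, natDegree_C] at this
      exact one_ne_zero this
  have hQroots : ∀ r ∈ Q.roots, r.im = 0 := by
    intro r hr
    have hroot : Q.IsRoot r := isRoot_of_mem_roots hr
    have hev : P.eval (1 - r) = 0 := by
      have := hroot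
      rw [hQdef, Polynomial.IsRoot, Polynomial.eval_comp] at this
      simpa using this
    have := hp (1 - r) hev
    simp only [Complex.sub_im, Complex.one_im, zero_sub, neg_eq_zero] at this
    exact this
  have hcard : Multiset.card Q.roots = n := by
    rw [Polynomial.splits_iff_card_roots.mp (IsAlgClosed.splits Q), hQdeg]
  have hfact : Polynomial.reflect n Q
      = Polynomial.C Q.leadingCoeff * (Q.roots.map fun r => (1 : ℂ[X]) - Polynomial.C r * X).prod := by
    conv_lhs => rw [(IsAlgClosed.splits Q).eq_prod_roots]
    rw [Polynomial.reflect_C_mul]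
    congr 1
    rw [← hcard]
    exact LagAux.reflect_prod Q.roots
  -- the key algebraic identity
  have hmain : (n.factorial : ℂ) • ((Phi p).map (algebraMap ℝ ℂ))
      = (Polynomial.aeval LagAux.Dop (Polynomial.reflect n Q)) (X ^ n : ℂ[X]) := by
    ext j
    rw [Polynomial.coeff_smul, LagAux.W_coeff Q n hQdeg.le j, Polynomial.coeff_map]
    have hcoe : (algebraMap ℝ ℂ) ((Phi p).coeff j) = ((Phi p).coeff j : ℂ) := rfl
    rw [hcoe, LagAux.coeff_Phi p j, hQdef, hPdef, LagAux.coeff_Q p j]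
    rcases le_or_gt j n with hj | hj
    · rw [if_pos hj, Finset.sum_mul]
      push_cast
      rw [smul_eq_mul, Finset.mul_sum]
      apply Finset.sum_congr rfl
      intro m _
      have hfacnat : (j.factorial) * (n.descFactorial (n - j)) = n.factorial := by
        have h1 : n - (n - j) = j := by omega
        have := Nat.factorial_mul_descFactorial (Nat.sub_le n j)
        rwa [h1] at this
      have hfac : (j.factorial : ℂ) * (n.descFactorial (n - j) : ℂ) = (n.factorial : ℂ) := by
        exact_mod_cast congrArg (Nat.cast : ℕ → ℂ) hfacnat
      have hjne : (j.factorial : ℂ) ≠ 0 := by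
        exact_mod_cast Nat.factorial_ne_zero j
      field_simp
      rw [← hfac]
      ring
    · rw [if_neg (not_le.mpr hj), smul_eq_mul]
      have : ∀ m ∈ Finset.range (n + 1),
          p.coeff m * ((-1 : ℝ) ^ j * (m.choose j) / (Nat.factorial j)) = 0 := by
        intro m hm
        have : m.choose j = 0 := Nat.choose_eq_zero_of_lt (by
          rw [Finset.mem_range] at hm; omega)
        simp [this]
      rw [Finset.sum_eq_zero this]
      simp
  -- real-rootedness of the right-hand side
  have hXn : (X ^ n : ℂ[X]) ≠ 0 := pow_ne_zero n X_ne_zero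
  have hXnRR : LagAux.RR (X ^ n : ℂ[X]) := by
    intro z hz
    simp only [Polynomial.IsRoot, Polynomial.eval_pow, Polynomial.eval_X] at hz
    rcases pow_eq_zero_iff'.mp hz with ⟨rfl, -⟩
    rfl
  obtain ⟨hW0, hWRR⟩ := LagAux.fold_RR Q.roots hQroots (X ^ n) hXn hXnRR
  have hb : Q.leadingCoeff ≠ 0 := Polynomial.leadingCoeff_ne_zero.mpr hQ0
  have hWRR' : LagAux.RR ((Polynomial.aeval LagAux.Dop (Polynomial.reflect n Q)) (X ^ n : ℂ[X])) := by
    rw [hfact, map_mul, Polynomial.aeval_C, Module.End.mul_apply, Module.algebraMap_end_apply]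
    intro z hz
    simp only [Polynomial.IsRoot] at hz
    rw [Polynomial.eval_smul, smul_eq_mul, mul_eq_zero] at hz
    exact hWRR z (hz.resolve_left hb)
  -- conclude
  intro z hz
  apply hWRR' z
  rw [← hmain]
  simp only [Polynomial.IsRoot] at hz ⊢
  rw [Polynomial.eval_smul, smul_eq_mul, hz, mul_zero]
end

section
/- For each n ≥ 1, the n-th Laguerre polynomial L_n(x) has n distinct real roots, all of which are positive. -/
open Polynomial

section Aux
open Set Filter



noncomputable def DD : Module.End ℝ ℝ[X] := Polynomial.derivative - 1

lemma DD_apply (q : ℝ[X]) : DD q = derivative q - q := by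
  simp [DD, LinearMap.sub_apply]

lemma neg_one_pow_apply (j : ℕ) (w : ℝ[X]) :
    ((-1 : Module.End ℝ ℝ[X]) ^ j) w = (-1 : ℝ) ^ j • w := by
  induction j with
  | zero => simp
  | succ j ih => rw [pow_succ, pow_succ, Module.End.mul_apply]; simp [ih, smul_smul, mul_comm]

lemma DD_pow_X_pow (n : ℕ) :
    ((DD ^ n) (X ^ n : ℝ[X])) = (n.factorial : ℝ) • laguerre n := by
  have hc : Commute (Polynomial.derivative : Module.End ℝ ℝ[X]) (-1) :=
    by have h := (Commute.one_right (Polynomial.derivative : Module.End ℝ ℝ[X])).neg_right; exact h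
  have hexp : DD ^ n = ∑ m ∈ Finset.range (n+1),
      (Polynomial.derivative : Module.End ℝ ℝ[X]) ^ m * (-1) ^ (n - m) * (n.choose m : Module.End ℝ ℝ[X]) := by
    rw [DD, sub_eq_add_neg, hc.add_pow]
  rw [hexp, LinearMap.sum_apply]
  have hterm : ∀ m ∈ Finset.range (n+1),
      ((Polynomial.derivative : Module.End ℝ ℝ[X]) ^ m * (-1) ^ (n - m) * (n.choose m : Module.End ℝ ℝ[X]))
        (X ^ n : ℝ[X])
      = ((n.choose m : ℝ) * (-1:ℝ)^(n-m) * (n.descFactorial m : ℝ)) • X ^ (n - m) := by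
    intro m hm
    rw [Module.End.mul_apply, Module.End.natCast_apply, map_nsmul, Module.End.mul_apply,
      neg_one_pow_apply, LinearMap.map_smul, Module.End.pow_apply,
      Polynomial.iterate_derivative_X_pow_eq_smul]
    rw [← Nat.cast_smul_eq_nsmul ℝ (n.choose m)]
    rw [smul_smul, smul_smul]
  rw [Finset.sum_congr rfl hterm]
  rw [laguerre, Finset.smul_sum]
  rw [← Finset.sum_range_reflect]
  apply Finset.sum_congr rfl
  intro k hk
  rw [Finset.mem_range] at hk
  have hkn : k ≤ n := Nat.lt_succ_iff.mp hk
  have e1 : n + 1 - 1 - k = n - k := by omega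
  have h1 : n - (n - k) = k := Nat.sub_sub_self hkn
  have h2 : n.choose (n - k) = n.choose k := Nat.choose_symm hkn
  have h3 : n.descFactorial (n - k) = (n-k).factorial * n.choose (n-k) :=
    Nat.descFactorial_eq_factorial_mul_choose _ _
  rw [e1, h1, h3, h2]
  have hfact : (n.choose k : ℝ) * k.factorial * (n-k).factorial = n.factorial := by
    exact_mod_cast congrArg Nat.cast (Nat.choose_mul_factorial_mul_factorial hkn)
  have hk0 : (k.factorial : ℝ) ≠ 0 := Nat.cast_ne_zero.mpr k.factorial_ne_zero
  rw [Polynomial.smul_eq_C_mul, Polynomial.smul_eq_C_mul, ← mul_assoc, ← Polynomial.C_mul]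
  refine congrArg (· * X ^ k) (congrArg Polynomial.C ?_)
  push_cast
  field_simp
  ring_nf
  ring_nf at hfact
  linear_combination (n.choose k : ℝ) * hfact


lemma hasDerivAt_eval_exp (q : ℝ[X]) (x : ℝ) :
    HasDerivAt (fun y => q.eval y * Real.exp (-y))
      ((derivative q - q).eval x * Real.exp (-x)) x := by
  have h1 : HasDerivAt (fun y => q.eval y) ((derivative q).eval x) x := q.hasDerivAt x
  have h2 : HasDerivAt (fun y : ℝ => Real.exp (-y)) (-Real.exp (-x)) x := by
    simpa using (hasDerivAt_neg x).exp
  have := h1.mul h2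
  refine this.congr_deriv ?_
  simp [Polynomial.eval_sub]
  ring

lemma rolle_step (q : ℝ[X]) {a b : ℝ} (hab : a < b) (ha : q.IsRoot a) (hb : q.IsRoot b) :
    ∃ c ∈ Set.Ioo a b, (derivative q - q).IsRoot c := by
  obtain ⟨c, hc, hc0⟩ := exists_hasDerivAt_eq_zero (f := fun y => q.eval y * Real.exp (-y))
    (f' := fun y => (derivative q - q).eval y * Real.exp (-y)) hab
    (((q.continuous_aeval).mul (Real.continuous_exp.comp continuous_neg)).continuousOn)
    (by simp [ha.eq_zero, hb.eq_zero])
    (fun x _ => hasDerivAt_eval_exp q x)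
  exact ⟨c, hc, by
    have := mul_eq_zero.mp hc0
    rcases this with h | h
    · exact h
    · exact absurd h (Real.exp_ne_zero _)⟩

lemma rolle_infty_aux (q : ℝ[X]) {b c0 : ℝ} (hb : q.IsRoot b) (hbc : b < c0)
    (hpos : 0 < q.eval c0 * Real.exp (-c0)) : ∃ c, b < c ∧ (derivative q - q).IsRoot c := by
  set f : ℝ → ℝ := fun y => q.eval y * Real.exp (-y) with hf
  have hcont : Continuous f := (q.continuous_aeval).mul (Real.continuous_exp.comp continuous_neg)
  have htend : Tendsto f atTop (nhds 0) := by
    have := Polynomial.tendsto_div_exp_atTop q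
    refine this.congr (fun x => ?_)
    rw [div_eq_mul_inv, ← Real.exp_neg]
  have hev : ∀ᶠ x in atTop, f x < f c0 := htend.eventually_lt_const hpos
  obtain ⟨M, hM⟩ := hev.exists_forall_of_atTop
  set M' : ℝ := max M c0 + 1 with hM'
  have hMM' : M ≤ M' := by have := le_max_left M c0; simp only [hM']; linarith
  have hc0M' : c0 < M' := by have := le_max_right M c0; simp only [hM']; linarith
  have hbM' : b < M' := lt_trans hbc hc0M'
  obtain ⟨c, hcmem, hcmax⟩ := (isCompact_Icc (a := b) (b := M')).exists_isMaxOn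
    (Set.nonempty_Icc.mpr hbM'.le) hcont.continuousOn
  have hfc : f c0 ≤ f c := hcmax ⟨hbc.le, hc0M'.le⟩
  have hpos' : 0 < f c0 := hpos
  have hcb : c ≠ b := by
    intro h; rw [h] at hfc
    have : f b = 0 := by simp [hf, hb.eq_zero]
    linarith
  have hcM' : c ≠ M' := by
    intro h; rw [h] at hfc
    have := hM M' hMM'
    linarith
  have hcIoo : c ∈ Set.Ioo b M' :=
    ⟨lt_of_le_of_ne hcmem.1 (Ne.symm hcb), lt_of_le_of_ne hcmem.2 hcM'⟩
  have hloc : IsLocalMax f c := hcmax.isLocalMax (Icc_mem_nhds hcIoo.1 hcIoo.2)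
  have hz := hloc.hasDerivAt_eq_zero (hasDerivAt_eval_exp q c)
  refine ⟨c, hcIoo.1, ?_⟩
  rcases mul_eq_zero.mp hz with h | h
  · exact h
  · exact absurd h (Real.exp_ne_zero _)

lemma rolle_infty (q : ℝ[X]) (hq : q ≠ 0) {b : ℝ} (hb : q.IsRoot b) :
    ∃ c, b < c ∧ (derivative q - q).IsRoot c := by
  have hfin : Set.Finite {x | q.IsRoot x} := Polynomial.finite_setOf_isRoot hq
  have : ((Set.Ioi b) \ {x | q.IsRoot x}).Nonempty := by
    have : (Set.Ioi b).Infinite := Set.Ioi_infinite b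
    exact (this.diff hfin).nonempty
  obtain ⟨c0, hc0mem, hc0⟩ := this
  simp only [Set.mem_setOf_eq] at hc0
  rcases lt_or_gt_of_ne (fun h => hc0 h) with hneg | hpos
  · -- q.eval c0 < 0 : apply aux to -q
    have : ∃ c, b < c ∧ (derivative (-q) - (-q)).IsRoot c := by
      apply rolle_infty_aux (-q) (by simpa using hb) hc0mem
      have : 0 < (-q).eval c0 := by simp; linarith
      positivity
    obtain ⟨c, hc, hroot⟩ := this
    refine ⟨c, hc, ?_⟩
    have : (derivative (-q) - (-q)) = -(derivative q - q) := by
      simp; ring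
    rw [this, IsRoot, eval_neg, neg_eq_zero] at hroot
    exact hroot
  · apply rolle_infty_aux q hb hc0mem
    positivity


lemma D_ne_zero {q : ℝ[X]} (hq : q ≠ 0) : derivative q - q ≠ 0 := by
  have hlt : (derivative q).degree < q.degree := q.degree_derivative_lt hq
  have : (derivative q - q).degree = q.degree := degree_sub_eq_right_of_degree_lt hlt
  intro h
  rw [h, degree_zero] at this
  exact hq (degree_eq_bot.mp this.symm)

lemma X_pow_dvd_D {m : ℕ} {q : ℝ[X]} (h : X ^ (m+1) ∣ q) : X ^ m ∣ derivative q - q := by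
  obtain ⟨r, rfl⟩ := h
  refine ⟨(m+1 : ℝ[X]) * r + X * derivative r - X * r, ?_⟩
  rw [derivative_mul, derivative_X_pow]
  simp only [Nat.cast_add, Nat.cast_one, C_add, C_1, C_eq_natCast]
  push_cast
  ring


lemma step {q : ℝ[X]} (hq : q ≠ 0) (hdvd : X ∣ q) {k : ℕ}
    (x : Fin k → ℝ) (hmono : StrictMono x) (hx : ∀ i, 0 < x i ∧ q.IsRoot (x i)) :
    ∃ y : Fin (k+1) → ℝ, StrictMono y ∧ ∀ i, 0 < y i ∧ (derivative q - q).IsRoot (y i) := by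
  set z : Fin (k+1) → ℝ := Fin.cons 0 x with hz
  have hz0 : z 0 = 0 := rfl
  have hzsucc : ∀ i : Fin k, z i.succ = x i := by intro i; simp [hz]
  have hzroot : ∀ j, q.IsRoot (z j) := by
    intro j
    refine Fin.cases ?_ ?_ j
    · rw [hz0]
      obtain ⟨r, hr⟩ := hdvd
      simp [hr]
    · intro i; rw [hzsucc]; exact (hx i).2
  have hznonneg : ∀ j, 0 ≤ z j := by
    intro j
    rcases Fin.eq_zero_or_eq_succ j with rfl | ⟨i, rfl⟩
    · rw [hz0]
    · rw [hzsucc]; exact (hx i).1.le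
  have hzmono : StrictMono z := by
    rw [Fin.strictMono_iff_lt_succ]
    intro i
    rcases Fin.eq_zero_or_eq_succ i.castSucc with h | ⟨j, hj⟩
    · rw [h, hz0, hzsucc]; exact (hx i).1
    · rw [hj, hzsucc, hzsucc]
      apply hmono
      have hv : j.val + 1 = i.val := by
        have := congrArg Fin.val hj.symm; simpa using this
      exact Fin.lt_def.mpr (by omega)
  have hg : ∀ i : Fin k, ∃ c, c ∈ Set.Ioo (z i.castSucc) (z i.succ) ∧
      (derivative q - q).IsRoot c := by
    intro i
    obtain ⟨c, hc1, hc2⟩ := rolle_step q (hzmono (Fin.castSucc_lt_succ (i := i))) (hzroot _) (hzroot _)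
    exact ⟨c, hc1, hc2⟩
  choose g hg1 hg2 using hg
  obtain ⟨clast, hclast1, hclast2⟩ := rolle_infty q hq (hzroot (Fin.last k))
  refine ⟨Fin.snoc g clast, ?_, ?_⟩
  · rw [Fin.strictMono_iff_lt_succ]
    intro i
    rw [Fin.snoc_castSucc]
    rcases Fin.eq_castSucc_or_eq_last i.succ with ⟨j, hj⟩ | h
    · rw [hj, Fin.snoc_castSucc]
      have h1 : g i < z i.succ := (hg1 i).2
      have h2 : z j.castSucc < g j := (hg1 j).1
      rw [hj] at h1
      linarith
    · rw [h, Fin.snoc_last]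
      have h1 : g i < z i.succ := (hg1 i).2
      have h2 : z i.succ ≤ z (Fin.last k) := hzmono.monotone (Fin.le_last _)
      linarith
  · intro i
    rcases Fin.eq_castSucc_or_eq_last i with ⟨j, hj⟩ | h
    · rw [hj, Fin.snoc_castSucc]
      exact ⟨lt_of_le_of_lt (hznonneg _) (hg1 j).1, hg2 j⟩
    · rw [h, Fin.snoc_last]
      exact ⟨lt_of_le_of_lt (hznonneg _) hclast1, hclast2⟩

end Aux



lemma DD_pow_succ (k : ℕ) (v : ℝ[X]) :
    (DD ^ (k+1)) v = derivative ((DD ^ k) v) - (DD ^ k) v := by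
  rw [pow_succ', Module.End.mul_apply]
  rfl

lemma main (n : ℕ) : ∀ k, k ≤ n →
    ((X : ℝ[X]) ^ (n - k) ∣ (DD ^ k) (X ^ n)) ∧ ((DD ^ k) (X ^ n) ≠ 0) ∧
    ∃ x : Fin k → ℝ, StrictMono x ∧ ∀ i, 0 < x i ∧ ((DD ^ k) (X ^ n)).IsRoot (x i) := by
  intro k
  induction k with
  | zero =>
    intro _
    refine ⟨by simp, by simp [pow_ne_zero, X_ne_zero], Fin.elim0, fun a => a.elim0, fun i => i.elim0⟩
  | succ k ih =>
    intro hk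
    obtain ⟨hdvd, hne, x, hmono, hx⟩ := ih (by omega)
    have hXdvd : (X : ℝ[X]) ∣ (DD ^ k) (X ^ n) := by
      refine dvd_trans ?_ hdvd
      exact dvd_pow_self X (by omega)
    have hd2 : (X : ℝ[X]) ^ (n - (k+1) + 1) ∣ (DD ^ k) (X ^ n) := by
      have : n - (k+1) + 1 = n - k := by omega
      rwa [this]
    refine ⟨?_, ?_, ?_⟩
    · rw [DD_pow_succ]
      exact X_pow_dvd_D hd2
    · rw [DD_pow_succ]
      exact D_ne_zero hne
    · rw [DD_pow_succ]
      exact step hne hXdvd x hmono hx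

theorem stmt_5 (n : ℕ) (hn : 1 ≤ n) :
    ∃ s : Finset ℝ, s.card = n ∧ ∀ x ∈ s, 0 < x ∧ (laguerre n).IsRoot x := by
  obtain ⟨-, -, x, hmono, hx⟩ := main n n le_rfl
  refine ⟨Finset.image x Finset.univ, ?_, ?_⟩
  · rw [Finset.card_image_of_injective _ hmono.injective, Finset.card_univ, Fintype.card_fin]
  · intro t ht
    obtain ⟨i, -, rfl⟩ := Finset.mem_image.mp ht
    refine ⟨(hx i).1, ?_⟩
    have hroot := (hx i).2
    rw [DD_pow_X_pow, IsRoot, Polynomial.smul_eq_C_mul, eval_mul, eval_C] at hroot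
    rcases mul_eq_zero.mp hroot with h | h
    · exact absurd h (Nat.cast_ne_zero.mpr n.factorial_ne_zero)
    · exact h
end

section
/- If a real polynomial p of degree n has all real roots and all coefficients nonnegative, then ∑_{k} a_k x^k / k! (where p(x) = ∑ a_k x^k) has all real roots, all of which are nonpositive. -/
open Polynomial

open Polynomial Filter Set

lemma gcont (p : ℝ[X]) (s : ℝ) : Continuous (fun x => Real.exp (x / s) * p.eval x) :=
  ((Real.continuous_exp.comp (continuous_id.div_const s)).mul p.continuous_aeval)

lemma gderiv (p : ℝ[X]) {s : ℝ} (hs : s ≠ 0) (x : ℝ) :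
    HasDerivAt (fun x => Real.exp (x / s) * p.eval x)
      (Real.exp (x / s) / s * (p + s • derivative p).eval x) x := by
  have h1 : HasDerivAt (fun x : ℝ => Real.exp (x / s)) (Real.exp (x / s) * (1 / s)) x := by
    have := (Real.hasDerivAt_exp (x / s)).comp x ((hasDerivAt_id x).div_const s)
    exact this
  have := h1.fun_mul (p.hasDerivAt x)
  refine this.congr_deriv ?_
  simp only [eval_add, eval_smul, smul_eq_mul]
  field_simp

lemma rolle_between (p : ℝ[X]) {s : ℝ} (hs : 0 < s) {x y : ℝ} (hxy : x < y)
    (hx : p.eval x = 0) (hy : p.eval y = 0) :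
    ∃ z ∈ Ioo x y, (p + s • derivative p).eval z = 0 := by
  obtain ⟨z, hz, hz0⟩ := exists_hasDerivAt_eq_zero hxy
    (gcont p s).continuousOn (by simp [hx, hy])
    (fun c _ => gderiv p hs.ne' c)
  refine ⟨z, hz, ?_⟩
  have h1 : Real.exp (z / s) / s ≠ 0 := div_ne_zero (Real.exp_ne_zero _) hs.ne'
  exact (mul_eq_zero.1 hz0).resolve_left h1

lemma tendsto_g_atBot (p : ℝ[X]) {s : ℝ} (hs : 0 < s) :
    Tendsto (fun x => Real.exp (x / s) * p.eval x) atBot (nhds 0) := by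
  have h1 : Tendsto (fun x : ℝ => -x / s) atBot atTop :=
    (tendsto_neg_atBot_atTop).atTop_div_const hs
  have h2 := (p.comp (Polynomial.C (-s) * Polynomial.X)).tendsto_div_exp_atTop.comp h1
  refine h2.congr fun x => ?_
  simp only [Function.comp, eval_comp, eval_mul, eval_C, eval_X]
  have hx : -s * (-x / s) = x := by field_simp
  rw [hx, div_eq_mul_inv, ← Real.exp_neg, neg_div, neg_neg, mul_comm]

/-- extra root below the minimal root -/
lemma rolle_bot (p : ℝ[X]) {s : ℝ} (hs : 0 < s) {x₀ : ℝ} (hx₀ : p.eval x₀ = 0)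
    (hmin : ∀ y, p.eval y = 0 → x₀ ≤ y) :
    ∃ z < x₀, (p + s • derivative p).eval z = 0 := by
  set g : ℝ → ℝ := fun x => Real.exp (x / s) * p.eval x with hg
  set h : ℝ → ℝ := fun x => g x * g x with hh
  have hgpos : ∀ y < x₀, g y ≠ 0 := by
    intro y hy
    have : p.eval y ≠ 0 := fun h0 => absurd (hmin y h0) (not_le.2 hy)
    exact mul_ne_zero (Real.exp_ne_zero _) this
  have hc : 0 < h (x₀ - 1) := by
    exact mul_self_pos.2 (hgpos (x₀ - 1) (by linarith))
  have hht : Tendsto h atBot (nhds 0) := by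
    simpa using (tendsto_g_atBot p hs).mul (tendsto_g_atBot p hs)
  have hev : ∀ᶠ x in atBot, h x < h (x₀ - 1) := hht.eventually_lt_const hc
  obtain ⟨b, hb⟩ := eventually_atBot.1 hev
  set z₀ : ℝ := min b (x₀ - 1) with hz₀
  have hz₀lt : z₀ < x₀ := lt_of_le_of_lt (min_le_right _ _) (by linarith)
  have hz₀le : z₀ ≤ x₀ - 1 := min_le_right _ _
  have hz₀h : h z₀ < h (x₀ - 1) := hb z₀ (min_le_left _ _)
  -- maximum of h on [z₀, x₀]
  obtain ⟨w, hw, hwmax⟩ := (isCompact_Icc (a := z₀) (b := x₀)).exists_isMaxOn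
    (Set.nonempty_Icc.2 hz₀lt.le) ((gcont p s).mul (gcont p s)).continuousOn
  have hwc : h (x₀ - 1) ≤ h w := hwmax (Set.mem_Icc.2 ⟨hz₀le, by linarith⟩)
  have hx01 : (0:ℝ) < h w := lt_of_lt_of_le hc hwc
  have hwz₀ : w ≠ z₀ := by rintro rfl; exact absurd hwc (not_le.2 hz₀h)
  have hwx₀ : w ≠ x₀ := by
    intro he
    rw [he] at hx01
    simp [hh, hg, hx₀] at hx01
  have hwIoo : w ∈ Ioo z₀ x₀ :=
    ⟨lt_of_le_of_ne (Set.mem_Icc.1 hw).1 (Ne.symm hwz₀), lt_of_le_of_ne (Set.mem_Icc.1 hw).2 hwx₀⟩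
  have hloc : IsLocalMax h w := hwmax.isLocalMax (Icc_mem_nhds hwIoo.1 hwIoo.2)
  have hd : HasDerivAt h (Real.exp (w / s) / s * (p + s • derivative p).eval w * g w +
      g w * (Real.exp (w / s) / s * (p + s • derivative p).eval w)) w :=
    (gderiv p hs.ne' w).mul (gderiv p hs.ne' w)
  have h0 := hloc.hasDerivAt_eq_zero hd
  have hgw : g w ≠ 0 := fun h' => by simp [hh, h'] at hx01
  refine ⟨w, hwIoo.2, ?_⟩
  have hexp : Real.exp (w / s) / s ≠ 0 := div_ne_zero (Real.exp_ne_zero _) hs.ne'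
  have : Real.exp (w / s) / s * (p + s • derivative p).eval w * g w * 2 = 0 := by linarith
  rcases mul_eq_zero.1 this with h' | h'
  · rcases mul_eq_zero.1 h' with h'' | h''
    · exact (mul_eq_zero.1 h'').resolve_left hexp
    · exact absurd h'' hgw
  · norm_num at h'
open Polynomial Filter Set

section counting
variable {p : ℝ[X]} {s : ℝ}

lemma myFinset.card_le_diff {s t : Finset ℝ}
    (h : ∀ x ∈ s, ∀ y ∈ s, x < y → (∀ z ∈ s, z ∉ Set.Ioo x y) → ∃ z ∈ t, x < z ∧ z < y)
    (h0 : ∀ x ∈ s, (∀ y ∈ s, x ≤ y) → ∃ z ∈ t, z < x) : s.card ≤ (t \ s).card := by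
  classical
  rcases s.eq_empty_or_nonempty with rfl | hne
  · simp
  set m := s.min' hne with hm
  obtain ⟨z₀, hz₀t, hz₀m⟩ := h0 m (s.min'_mem hne) (fun y hy => s.min'_le y hy)
  have hz₀s : z₀ ∉ s := fun hz => absurd (s.min'_le z₀ hz) (not_le.2 hz₀m)
  have key : s.card ≤ ((t.erase z₀) \ s).card + 1 := by
    apply Finset.card_le_diff_of_interleaved
    intro x hx y hy hxy hs'
    obtain ⟨z, hzt, hxz, hzy⟩ := h x hx y hy hxy hs'
    refine ⟨z, Finset.mem_erase.2 ⟨?_, hzt⟩, hxz, hzy⟩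
    have : m ≤ x := s.min'_le x hx
    exact fun he => by subst he; exact absurd (lt_of_lt_of_le hz₀m this) (not_lt.2 hxz.le)
  have h1 : (t.erase z₀) \ s = (t \ s).erase z₀ := Finset.erase_sdiff_comm t s z₀
  have hz₀ts : z₀ ∈ t \ s := Finset.mem_sdiff.2 ⟨hz₀t, hz₀s⟩
  have hpos : 0 < (t \ s).card := Finset.card_pos.2 ⟨z₀, hz₀ts⟩
  rw [h1, Finset.card_erase_of_mem hz₀ts] at key
  omega

lemma sum_count_le (F : Finset ℝ) (M : Multiset ℝ) : ∑ x ∈ F, M.count x ≤ Multiset.card M := by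
  classical
  calc ∑ x ∈ F, M.count x = ∑ x ∈ F ∩ M.toFinset, M.count x := by
        refine (Finset.sum_subset Finset.inter_subset_left fun x hx hx' => ?_).symm
        have : x ∉ M.toFinset := fun h => hx' (Finset.mem_inter.2 ⟨hx, h⟩)
        simpa [Multiset.count_eq_zero] using fun h => this (Multiset.mem_toFinset.2 h)
    _ ≤ ∑ x ∈ M.toFinset, M.count x :=
        Finset.sum_le_sum_of_subset Finset.inter_subset_right
    _ = Multiset.card M := M.toFinset_sum_count_eq

lemma q_natDegree (hp : p ≠ 0) :
    (p + s • derivative p).natDegree = p.natDegree ∧ p + s • derivative p ≠ 0 := by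
  set n := p.natDegree with hn
  have hco : (p + s • derivative p).coeff n = p.coeff n := by
    rw [coeff_add, coeff_smul, coeff_derivative]
    rw [coeff_natDegree_succ_eq_zero]
    simp
  have hne : (p + s • derivative p).coeff n ≠ 0 := by
    rw [hco]; exact mt leadingCoeff_eq_zero.1 hp
  have hle : (p + s • derivative p).natDegree ≤ n := by
    refine natDegree_add_le_of_degree_le le_rfl ?_
    exact (natDegree_smul_le s _).trans (p.natDegree_derivative_le.trans (Nat.sub_le _ _))
  exact ⟨le_antisymm hle (le_natDegree_of_ne_zero hne), fun h => by simp [h] at hne⟩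

lemma rootMult_le (hp : p ≠ 0) (x : ℝ) :
    p.rootMultiplicity x - 1 ≤ (p + s • derivative p).rootMultiplicity x := by
  have hq : p + s • derivative p ≠ 0 := (q_natDegree hp).2
  rw [le_rootMultiplicity_iff hq]
  have h1 : (X - C x) ^ (p.rootMultiplicity x - 1) ∣ p :=
    dvd_trans (pow_dvd_pow _ (Nat.sub_le _ _)) (pow_rootMultiplicity_dvd p x)
  have h2 : (X - C x) ^ (p.rootMultiplicity x - 1) ∣ derivative p :=
    dvd_trans (pow_dvd_pow _ (p.rootMultiplicity_sub_one_le_derivative_rootMultiplicity x))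
      (pow_rootMultiplicity_dvd _ x)
  refine dvd_add h1 ?_
  rw [smul_eq_C_mul]
  exact h2.mul_left _

lemma card_roots_shift (hp : p ≠ 0) (hs : 0 < s) :
    Multiset.card p.roots ≤ Multiset.card (p + s • derivative p).roots := by
  classical
  set q := p + s • derivative p with hqdef
  have hq : q ≠ 0 := (q_natDegree hp).2
  -- interleaving
  have hF : p.roots.toFinset.card ≤ (q.roots.toFinset \ p.roots.toFinset).card := by
    apply myFinset.card_le_diff
    · intro x hx y hy hxy _
      rw [Multiset.mem_toFinset, mem_roots hp] at hx hy
      obtain ⟨z, hz, hz0⟩ := rolle_between p hs hxy hx hy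
      exact ⟨z, Multiset.mem_toFinset.2 ((mem_roots hq).2 hz0), hz.1, hz.2⟩
    · intro x hx hxmin
      rw [Multiset.mem_toFinset, mem_roots hp] at hx
      have hmin : ∀ y, p.eval y = 0 → x ≤ y := fun y hy =>
        hxmin y (Multiset.mem_toFinset.2 ((mem_roots hp).2 hy))
      obtain ⟨z, hz, hz0⟩ := rolle_bot p hs hx hmin
      exact ⟨z, Multiset.mem_toFinset.2 ((mem_roots hq).2 hz0), hz⟩
  calc Multiset.card p.roots = ∑ x ∈ p.roots.toFinset, p.roots.count x :=
        (Multiset.toFinset_sum_count_eq _).symm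
    _ = ∑ x ∈ p.roots.toFinset, (p.roots.count x - 1) + p.roots.toFinset.card := by
        rw [Finset.card_eq_sum_ones, ← Finset.sum_add_distrib]
        refine Finset.sum_congr rfl fun x hx => ?_
        have : 1 ≤ p.roots.count x := Multiset.count_pos.2 (Multiset.mem_toFinset.1 hx)
        omega
    _ ≤ ∑ x ∈ p.roots.toFinset, q.roots.count x +
        ∑ x ∈ q.roots.toFinset \ p.roots.toFinset, q.roots.count x := by
        refine add_le_add (Finset.sum_le_sum fun x _ => ?_) (hF.trans ?_)
        · rw [count_roots, count_roots]
          exact rootMult_le hp x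
        · rw [Finset.card_eq_sum_ones]
          refine Finset.sum_le_sum fun x hx => ?_
          rw [count_roots]
          exact (rootMultiplicity_pos hq).2
            ((mem_roots hq).1 (Multiset.mem_toFinset.1 (Finset.mem_sdiff.1 hx).1))
    _ = ∑ x ∈ p.roots.toFinset ∪ (q.roots.toFinset \ p.roots.toFinset), q.roots.count x := by
        rw [Finset.sum_union Finset.disjoint_sdiff]
    _ ≤ Multiset.card q.roots := sum_count_le _ _

/-- the core preservation lemma -/
lemma good_shift (hp : p ≠ 0) (hroots : Multiset.card p.roots = p.natDegree) (hs : 0 ≤ s) :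
    p + s • derivative p ≠ 0 ∧ (p + s • derivative p).natDegree = p.natDegree ∧
      Multiset.card (p + s • derivative p).roots = (p + s • derivative p).natDegree := by
  rcases eq_or_lt_of_le hs with heq | hs'
  · subst heq; simpa using ⟨hp, hroots⟩
  obtain ⟨hdeg, hq⟩ := q_natDegree (s := s) hp
  refine ⟨hq, hdeg, le_antisymm (card_roots' _) ?_⟩
  rw [hdeg, ← hroots]
  exact card_roots_shift hp hs'

end counting
open Polynomial

noncomputable def Dop : Module.End ℝ ℝ[X] := Polynomial.derivative

lemma apD_eq (u f : ℝ[X]) (N : ℕ) (hu : u.natDegree ≤ N) :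
    (aeval Dop u) f = ∑ j ∈ Finset.range (N + 1), u.coeff j • ((⇑derivative)^[j] f) := by
  conv_lhs => rw [as_sum_range' u (N + 1) (Nat.lt_succ_of_le hu)]
  rw [map_sum, LinearMap.coe_sum, Finset.sum_apply]
  refine Finset.sum_congr rfl fun j _ => ?_
  rw [aeval_monomial]
  simp only [Module.End.mul_apply, Module.algebraMap_end_apply, Module.End.pow_apply]
  rfl

lemma iterD_monomial {n j : ℕ} (hj : j ≤ n) :
    (⇑derivative)^[j] ((monomial n) ((n.factorial : ℝ))⁻¹) =
      (monomial (n - j)) (((n - j).factorial : ℝ))⁻¹ := by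
  rw [← smul_X_eq_monomial, iterate_derivative_smul, iterate_derivative_X_pow_eq_smul,
    smul_smul, ← smul_X_eq_monomial]
  congr 1
  have h := Nat.factorial_mul_descFactorial hj
  have h2 : ((n - j).factorial : ℝ) * (n.descFactorial j : ℝ) = (n.factorial : ℝ) := by
    exact_mod_cast congrArg (Nat.cast : ℕ → ℝ) h
  field_simp
  linarith [h2]

lemma aeval_lin_s6 (s : ℝ) (g : ℝ[X]) : (aeval Dop (C s * X + 1)) g = g + s • derivative g := by
  simp only [map_add, map_mul, aeval_X, aeval_C, map_one]
  simp only [LinearMap.add_apply, Module.End.mul_apply, Module.End.one_apply,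
    Module.algebraMap_end_apply]
  rw [add_comm]
  rfl

lemma natDegree_prodXC (S : Multiset ℝ) :
    ((S.map fun s => X + C s).prod).natDegree = Multiset.card S := by
  rw [natDegree_multiset_prod_of_monic _ (fun f hf => by
    obtain ⟨s, _, rfl⟩ := Multiset.mem_map.1 hf; exact monic_X_add_C s)]
  rw [Multiset.map_map]
  have : (Multiset.map (natDegree ∘ fun s => X + C s) S) = S.map (fun _ => 1) :=
    Multiset.map_congr rfl (fun s _ => natDegree_X_add_C s)
  rw [this]
  simp [Multiset.map_const', Multiset.sum_replicate]

lemma reflect_prodXC (S : Multiset ℝ) :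
    reflect (Multiset.card S) ((S.map fun s => X + C s).prod) =
      (S.map fun s => C s * X + 1).prod := by
  induction S using Multiset.induction_on with
  | empty =>
      simp only [Multiset.map_zero, Multiset.prod_zero, Multiset.card_zero]
      rw [← C_1, reflect_C]; simp
  | cons s S ih =>
      simp only [Multiset.map_cons, Multiset.prod_cons, Multiset.card_cons]
      rw [show Multiset.card S + 1 = 1 + Multiset.card S from add_comm _ _,
        reflect_mul _ _ (by simp [natDegree_X_add_C]) (le_of_eq (natDegree_prodXC S)), ih]
      congr 1
      rw [reflect_add, ← pow_one (X : ℝ[X]), reflect_monomial, reflect_C]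
      rw [revAt_le (by norm_num)]
      ring

lemma natDegree_reflect_le {P : ℝ[X]} {n : ℕ} (hP : P.natDegree ≤ n) :
    (reflect n P).natDegree ≤ n := by
  refine natDegree_le_iff_coeff_eq_zero.2 fun i hi => ?_
  rw [coeff_reflect]
  exact coeff_eq_zero_of_natDegree_lt (lt_of_le_of_lt hP (by
    rcases le_or_gt i n with h | h
    · omega
    · rw [revAt_eq_self_of_lt h]; exact hi))

lemma chain_good (S : Multiset ℝ) (hS : ∀ s ∈ S, 0 ≤ s) (f : ℝ[X]) (hf : f ≠ 0)
    (hroots : Multiset.card f.roots = f.natDegree) :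
    (aeval Dop ((S.map fun s => C s * X + 1)).prod) f ≠ 0 ∧
    ((aeval Dop ((S.map fun s => C s * X + 1)).prod) f).natDegree = f.natDegree ∧
    Multiset.card ((aeval Dop ((S.map fun s => C s * X + 1)).prod) f).roots =
      ((aeval Dop ((S.map fun s => C s * X + 1)).prod) f).natDegree := by
  induction S using Multiset.induction_on with
  | empty => simpa using ⟨hf, hroots⟩
  | cons s S ih =>
      have hs : 0 ≤ s := hS s (Multiset.mem_cons_self s S)
      obtain ⟨h1, h2, h3⟩ := ih (fun t ht => hS t (Multiset.mem_cons_of_mem ht))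
      set g := (aeval Dop ((S.map fun s => C s * X + 1)).prod) f with hg
      simp only [Multiset.map_cons, Multiset.prod_cons, map_mul, Module.End.mul_apply, ← hg]
      rw [aeval_lin_s6]
      obtain ⟨k1, k2, k3⟩ := good_shift h1 h3 hs
      exact ⟨k1, k2.trans h2, k3⟩

lemma allreal_card {p : ℝ[X]} (hp0 : p ≠ 0)
    (h : ∀ z : ℂ, (p.map (algebraMap ℝ ℂ)).IsRoot z → z.im = 0) :
    Multiset.card p.roots = p.natDegree := by
  classical
  set q := p.map (algebraMap ℝ ℂ) with hq
  have hq0 : q ≠ 0 := (Polynomial.map_ne_zero_iff (algebraMap ℝ ℂ).injective).2 hp0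
  have h1 : Multiset.card q.roots = q.natDegree :=
    splits_iff_card_roots.1 (IsAlgClosed.splits q)
  have h2 : q.natDegree = p.natDegree := natDegree_map _
  have h3 : q.roots ≤ p.roots.map (fun x : ℝ => (x : ℂ)) := by
    refine Multiset.le_iff_count.2 fun z => ?_
    by_cases hz : z ∈ q.roots
    · have hr : q.IsRoot z := isRoot_of_mem_roots hz
      have him := h z hr
      have hzeq : ((z.re : ℝ) : ℂ) = z := Complex.ext (by simp) (by simp [him])
      rw [← hzeq, Multiset.count_map_eq_count' _ _ Complex.ofReal_injective, count_roots,
        count_roots, eq_rootMultiplicity_map (f := algebraMap ℝ ℂ)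
          (algebraMap ℝ ℂ).injective z.re]
      rfl
    · rw [Multiset.count_eq_zero_of_notMem hz]; exact Nat.zero_le _
  have h4 : Multiset.card q.roots ≤ Multiset.card p.roots := by
    have := Multiset.card_le_card h3
    simpa using this
  have h5 : Multiset.card p.roots ≤ p.natDegree := card_roots' p
  omega

lemma roots_nonpos {q : ℝ[X]} (hq : q ≠ 0) (h : ∀ k, 0 ≤ q.coeff k) {x : ℝ}
    (hx : q.eval x = 0) : x ≤ 0 := by
  by_contra hx0
  push_neg at hx0
  have : 0 < q.eval x := by
    rw [eval_eq_sum_range]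
    refine Finset.sum_pos' (fun i _ => mul_nonneg (h i) (pow_nonneg hx0.le i)) ?_
    refine ⟨q.natDegree, Finset.self_mem_range_succ _, ?_⟩
    have hlc : q.coeff q.natDegree ≠ 0 := mt leadingCoeff_eq_zero.1 hq
    exact mul_pos (lt_of_le_of_ne (h _) (Ne.symm hlc)) (pow_pos hx0 _)
  rw [hx] at this; exact lt_irrefl _ this

lemma Tfac_coeff_nonneg {p : ℝ[X]} (h : ∀ k, 0 ≤ p.coeff k) (k : ℕ) :
    0 ≤ (Tfac p).coeff k := by
  classical
  rw [Tfac, finset_sum_coeff]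
  refine Finset.sum_nonneg fun j _ => ?_
  rw [coeff_C_mul, coeff_X_pow]
  by_cases hkj : k = j
  · simp only [hkj, eq_self_iff_true, if_true, mul_one]
    exact div_nonneg (h j) (Nat.cast_nonneg _)
  · simp [hkj]

lemma Tfac_main (p : ℝ[X]) (hp0 : p ≠ 0) (hcard : Multiset.card p.roots = p.natDegree)
    (hnn : ∀ r ∈ p.roots, r ≤ 0) :
    Tfac p ≠ 0 ∧ (Tfac p).natDegree = p.natDegree ∧
      Multiset.card (Tfac p).roots = (Tfac p).natDegree := by
  classical
  have hc : p.leadingCoeff ≠ 0 := mt leadingCoeff_eq_zero.1 hp0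
  set n := p.natDegree with hn
  set S : Multiset ℝ := p.roots.map (fun r => -r) with hS
  have hSnn : ∀ s ∈ S, 0 ≤ s := by
    intro s hs
    obtain ⟨r, hr, rfl⟩ := Multiset.mem_map.1 hs
    have := hnn r hr; linarith
  have hcardS : Multiset.card S = n := by rw [hS, Multiset.card_map, hcard]
  set P : ℝ[X] := ((S.map fun s => X + C s)).prod with hP
  have hPp : C p.leadingCoeff * P = p := by
    rw [hP, hS, Multiset.map_map]
    have he : (p.roots.map ((fun s => X + C s) ∘ fun r => -r)) =
        p.roots.map (fun a => X - C a) :=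
      Multiset.map_congr rfl (fun r _ => by simp [sub_eq_add_neg, map_neg])
    rw [he]
    exact C_leadingCoeff_mul_prod_multiset_X_sub_C hcard
  have hPdeg : P.natDegree = n := by rw [hP, natDegree_prodXC, hcardS]
  set u : ℝ[X] := ((S.map fun s => C s * X + 1)).prod with hu
  have hur : u = reflect n P := by rw [hu, hP, ← hcardS, reflect_prodXC]
  have hudeg : u.natDegree ≤ n := by
    rw [hur]; exact natDegree_reflect_le (le_of_eq hPdeg)
  set f0 : ℝ[X] := (monomial n) ((n.factorial : ℝ))⁻¹ with hf0
  have hfac : ((n.factorial : ℝ))⁻¹ ≠ 0 := inv_ne_zero (by exact_mod_cast n.factorial_ne_zero)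
  have hf0ne : f0 ≠ 0 := by
    rw [hf0]; exact fun h => hfac (by simpa using (monomial_eq_zero_iff _ _).1 h)
  have hf0deg : f0.natDegree = n := by rw [hf0, natDegree_monomial]; simp [hfac]
  have hf0roots : Multiset.card f0.roots = f0.natDegree := by
    rw [hf0deg, hf0, ← C_mul_X_pow_eq_monomial, roots_C_mul _ hfac, roots_X_pow]
    simp
  obtain ⟨hg0, hgdeg, hgroots⟩ := chain_good S hSnn f0 hf0ne hf0roots
  rw [← hu] at hg0 hgdeg hgroots
  have hid : Tfac p = C p.leadingCoeff * (aeval Dop u) f0 := by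
    rw [apD_eq u f0 n hudeg]
    have hstep : ∀ j ∈ Finset.range (n + 1), u.coeff j • (⇑derivative)^[j] f0
        = P.coeff (n - j) • (monomial (n - j)) (((n - j).factorial : ℝ))⁻¹ := by
      intro j hj
      have hjle : j ≤ n := Nat.lt_succ_iff.1 (Finset.mem_range.1 hj)
      rw [hur, hf0, iterD_monomial hjle, coeff_reflect, revAt_le hjle]
    rw [Finset.sum_congr rfl hstep]
    have hrefl := Finset.sum_range_reflect
      (fun k => P.coeff k • (monomial k) (((k).factorial : ℝ))⁻¹) (n + 1)
    simp only [Nat.add_sub_cancel] at hrefl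
    rw [hrefl, Finset.mul_sum, Tfac]
    have hpc : ∀ k, p.coeff k = p.leadingCoeff * P.coeff k := fun k => by
      conv_lhs => rw [← hPp]
      rw [coeff_C_mul]
    refine Finset.sum_congr rfl fun k _ => ?_
    rw [C_mul_X_pow_eq_monomial, hpc k, smul_monomial, C_mul_monomial]
    congr 1
    rw [smul_eq_mul, div_eq_mul_inv]
    ring
  refine ⟨?_, ?_, ?_⟩
  · rw [hid]; exact mul_ne_zero (by simpa using hc) hg0
  · rw [hid, natDegree_C_mul hc, hgdeg, hf0deg]
  · rw [hid, natDegree_C_mul hc, roots_C_mul _ hc, hgroots]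

theorem stmt_6 (p : ℝ[X]) (hp : AllRealRoots p) (hcoeff : ∀ k, 0 ≤ p.coeff k) :
    AllRealRoots (Tfac p) ∧
      ∀ z : ℂ, ((Tfac p).map (algebraMap ℝ ℂ)).IsRoot z → z.re ≤ 0 := by
  have hp0 : p ≠ 0 := by
    intro h
    have h2 := hp Complex.I (by simp [h, IsRoot])
    simpa using h2
  have hcard := allreal_card hp0 hp
  have hnn : ∀ r ∈ p.roots, r ≤ 0 := fun r hr =>
    roots_nonpos hp0 hcoeff (isRoot_of_mem_roots hr)
  obtain ⟨hT0, hTdeg, hTroots⟩ := Tfac_main p hp0 hcard hnn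
  have hTc := Tfac_coeff_nonneg hcoeff
  have hmapne : (Tfac p).map (algebraMap ℝ ℂ) ≠ 0 :=
    (Polynomial.map_ne_zero_iff (algebraMap ℝ ℂ).injective).2 hT0
  have hmaproots : ((Tfac p).map (algebraMap ℝ ℂ)).roots
      = (Tfac p).roots.map (⇑(algebraMap ℝ ℂ)) :=
    (roots_map_of_injective_of_card_eq_natDegree (algebraMap ℝ ℂ).injective hTroots).symm
  constructor
  · intro z hz
    have hzr : z ∈ ((Tfac p).map (algebraMap ℝ ℂ)).roots := (mem_roots hmapne).2 hz
    rw [hmaproots] at hzr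
    obtain ⟨x, hx, rfl⟩ := Multiset.mem_map.1 hzr
    simp
  · intro z hz
    have hzr : z ∈ ((Tfac p).map (algebraMap ℝ ℂ)).roots := (mem_roots hmapne).2 hz
    rw [hmaproots] at hzr
    obtain ⟨x, hx, rfl⟩ := Multiset.mem_map.1 hzr
    have hx0 : x ≤ 0 := roots_nonpos hT0 hTc (isRoot_of_mem_roots hx)
    simpa using hx0
end
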